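/- Let A be a subset of Baire space, let κ be an ordinal, and let φ⃗ = ⟨φ_i : i < ω⟩ be a scale on A with each norm φ_i : A → κ. Let T be the set of pairs (s, f) of finite sequences of equal length n, with s ∈ ℕ^n and f ∈ κ^n, such that there is some x ∈ A with s = x↾n and f(i) = φ_i(x) for each i < n. Then T is a tree on ℕ × κ and p[T] = A. -/
import Mathlib


/-- The restriction `x↾n` of an infinite sequence `x : ℕ → β` to a finite
sequence (list) of length `n`. -/
def seqRestrict {β : Type*} (x : ℕ → β) (n : ℕ) : List β :=
  List.ofFn fun i : Fin n => x i

/-- `T` is a tree on `ℕ × κ`: a set of pairs of finite sequences of equal length, with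
entries of the second coordinate ordinals `< κ`, closed under simultaneous restriction. -/
def IsTreeOn (κ : Ordinal) (T : Set (List ℕ × List Ordinal)) : Prop :=
  ∀ p ∈ T, p.1.length = p.2.length ∧ (∀ o ∈ p.2, o < κ) ∧
    ∀ i ≤ p.1.length, (p.1.take i, p.2.take i) ∈ T

/-- `(x, g)` is a branch of the tree `T` on `ℕ × κ`. -/
def IsBranchOf (T : Set (List ℕ × List Ordinal)) (x : ℕ → ℕ) (g : ℕ → Ordinal) : Prop :=
  ∀ n : ℕ, (seqRestrict x n, seqRestrict g n) ∈ T

/-- The projection `p[T]` of the set of branches of `T` to the first coordinate. -/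
def treeProj (T : Set (List ℕ × List Ordinal)) : Set (ℕ → ℕ) :=
  {x | ∃ g : ℕ → Ordinal, IsBranchOf T x g}

/-- `φ = ⟨φ n : n < ω⟩` is a scale on `A`: whenever `xs` is a sequence of elements of `A`
converging pointwise to `x`, and for each `n` the sequence `⟨φ n (xs i) : i < ω⟩` is
eventually constant with value `lam n`, then `x ∈ A` and `φ n x ≤ lam n` for all `n`. -/
def IsScale (A : Set (ℕ → ℕ)) (φ : ℕ → (ℕ → ℕ) → Ordinal) : Prop :=
  ∀ (xs : ℕ → (ℕ → ℕ)) (x : ℕ → ℕ) (lam : ℕ → Ordinal),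
    (∀ i, xs i ∈ A) →
    (∀ m : ℕ, ∃ N : ℕ, ∀ i ≥ N, xs i m = x m) →
    (∀ n : ℕ, ∃ N : ℕ, ∀ i ≥ N, φ n (xs i) = lam n) →
    x ∈ A ∧ ∀ n : ℕ, φ n x ≤ lam n

/-- The tree of a scale: the set of pairs `(s, f)` of equal length `n` such that for some
`x ∈ A`, `s = x↾n` and `f i = φ i x` for `i < n`. -/
def scaleTree (A : Set (ℕ → ℕ)) (φ : ℕ → (ℕ → ℕ) → Ordinal) :
    Set (List ℕ × List Ordinal) :=
  {p | ∃ n : ℕ, ∃ x ∈ A, p.1 = seqRestrict x n ∧ p.2 = List.ofFn fun i : Fin n => φ i x}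

lemma take_seqRestrict {β : Type*} (x : ℕ → β) {i n : ℕ} (h : i ≤ n) :
    (seqRestrict x n).take i = seqRestrict x i := by
  apply List.ext_getElem
  · simp [seqRestrict, h]
  · intro m h1 h2
    simp [seqRestrict] at h1 h2 ⊢

lemma ofFn_eq_iff {β : Type*} {x : ℕ → β} {n : ℕ} {f : Fin n → β}
    (h : seqRestrict x n = List.ofFn f) : ∀ m (hm : m < n), x m = f ⟨m, hm⟩ := by
  intro m hm
  have := List.ofFn_injective h
  exact congrFun this ⟨m, hm⟩

/-- If `φ` is a scale on `A` with norms into `κ`, then the tree of the scale is a tree on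
`ℕ × κ` and its projection is exactly `A`. -/
theorem statement2 (A : Set (ℕ → ℕ)) (κ : Ordinal) (φ : ℕ → (ℕ → ℕ) → Ordinal)
    (hscale : IsScale A φ) (hbound : ∀ n : ℕ, ∀ x ∈ A, φ n x < κ) :
    IsTreeOn κ (scaleTree A φ) ∧ treeProj (scaleTree A φ) = A := by
  constructor
  · rintro p ⟨n, x, hx, h1, h2⟩
    refine ⟨by simp [h1, h2, seqRestrict], ?_, ?_⟩
    · intro o ho
      rw [h2, List.mem_ofFn] at ho
      obtain ⟨i, rfl⟩ := ho
      exact hbound i x hx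
    · intro i hi
      rw [h1] at hi
      simp [seqRestrict] at hi
      refine ⟨i, x, hx, ?_, ?_⟩
      · rw [h1, take_seqRestrict x hi]
      · rw [h2]
        apply List.ext_getElem
        · simp [hi]
        · intro m h1' h2'
          simp at h1' h2' ⊢
  · ext x
    constructor
    · rintro ⟨g, hg⟩
      -- for each n, get witness
      choose! n' xs hxsA hxs1 hxs2 using fun n => hg n
      have hlen : ∀ n, n' n = n := by
        intro n
        have := congrArg List.length (hxs1 n)
        simpa [seqRestrict] using this.symm
      have hx : ∀ n m, m < n → xs n m = x m := by
        intro n m hm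
        have h1 : seqRestrict x n = seqRestrict (xs n) n := by
          have := hxs1 n; rw [hlen n] at this; exact this
        exact (ofFn_eq_iff h1 m hm).symm
      have hφ : ∀ n m, m < n → φ m (xs n) = g m := by
        intro n m hm
        have h2 : seqRestrict g n = List.ofFn fun i : Fin n => φ i (xs n) := by
          have := hxs2 n; rw [hlen n] at this; exact this
        exact (ofFn_eq_iff h2 m hm).symm
      have := hscale xs x g hxsA
        (fun m => ⟨m + 1, fun i hi => hx i m (Nat.lt_of_lt_of_le (Nat.lt_succ_self m) hi)⟩)
        (fun n => ⟨n + 1, fun i hi => hφ i n (Nat.lt_of_lt_of_le (Nat.lt_succ_self n) hi)⟩)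
      exact this.1
    · intro hx
      refine ⟨fun n => φ n x, fun n => ⟨n, x, hx, rfl, ?_⟩⟩
      simp [seqRestrict]
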